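/- arXiv:2103.10893 — 5 statements merged into one kernel-verified Lean document; each statement's English description precedes it below -/
import Mathlib

section
/- Friedrichs' criterion: in the word algebra over a field of characteristic zero, an element is a Lie polynomial (lies in the free Lie algebra generated by the letters under commutators) if and only if it is primitive for the deshuffle coproduct. -/
/-- The deshuffle of a word: all ways of splitting it into a subword and the
complementary subword. -/
def desh {A : Type*} : List A → List (List A × List A)
  | [] => [([], [])]
  | a :: w =>
      ((desh w).map fun p => (a :: p.1, p.2)) ++ ((desh w).map fun p => (p.1, a :: p.2))

/-- The deshuffle coproduct on the word algebra, with `T(A) ⊗ T(A)` realized as the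
free vector space on pairs of words; it is the unique algebra morphism for
concatenation sending each letter `a` to `1 ⊗ a + a ⊗ 1`. -/
noncomputable def Dsh {A K : Type*} [Field K]
    (x : List A →₀ K) : (List A × List A) →₀ K :=
  x.sum fun w c => c • ((desh w).map (fun p => Finsupp.single p (1 : K))).sum

/-- The bilinear extension of the concatenation product of words. -/
noncomputable def concP {A K : Type*} [Field K]
    (x y : List A →₀ K) : List A →₀ K :=
  x.sum fun u cu => y.sum fun v cv => Finsupp.single (u ++ v) (cu * cv)

/-- `x` is primitive for the deshuffle coproduct: `Δ_⧢(x) = 1 ⊗ x + x ⊗ 1`. -/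
def IsPrimitive {A K : Type*} [Field K] (x : List A →₀ K) : Prop :=
  Dsh x = Finsupp.mapDomain (fun u => (([] : List A), u)) x
    + Finsupp.mapDomain (fun u => (u, ([] : List A))) x

/-- `x` is a Lie polynomial: it lies in the Lie subalgebra of the word algebra
generated by the letters under the commutator `[u,v] = uv − vu`. -/
inductive IsLiePoly {A K : Type*} [Field K] : (List A →₀ K) → Prop
  | zero : IsLiePoly 0
  | letter (a : A) : IsLiePoly (Finsupp.single [a] 1)
  | add {x y} : IsLiePoly x → IsLiePoly y → IsLiePoly (x + y)
  | smul (c : K) {x} : IsLiePoly x → IsLiePoly (c • x)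
  | bracket {x y} : IsLiePoly x → IsLiePoly y → IsLiePoly (concP x y - concP y x)

section CP
open Finsupp
variable {K : Type*} [Field K] {M : Type*} (m : M → M → M)

noncomputable def cP (x y : M →₀ K) : M →₀ K :=
  x.sum fun u cu => y.sum fun v cv => Finsupp.single (m u v) (cu * cv)

lemma cP_zero_left (y : M →₀ K) : cP m 0 y = 0 := by
  simp [cP]

lemma cP_zero_right (x : M →₀ K) : cP m x 0 = 0 := by
  simp [cP]

lemma cP_single_left (u : M) (c : K) (y : M →₀ K) :
    cP m (Finsupp.single u c) y = y.sum fun v cv => Finsupp.single (m u v) (c * cv) := by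
  unfold cP
  rw [Finsupp.sum_single_index]
  simp

lemma cP_single_single (u v : M) (c d : K) :
    cP m (Finsupp.single u c) (Finsupp.single v d) = Finsupp.single (m u v) (c * d) := by
  rw [cP_single_left, Finsupp.sum_single_index]
  simp

lemma cP_add_left (x x' y : M →₀ K) : cP m (x + x') y = cP m x y + cP m x' y := by
  unfold cP
  rw [Finsupp.sum_add_index' (by simp) (by
    intro u c c'
    rw [← Finsupp.sum_add]
    apply Finsupp.sum_congr
    intro v _
    rw [add_mul, Finsupp.single_add])]

lemma cP_add_right (x y y' : M →₀ K) : cP m x (y + y') = cP m x y + cP m x y' := by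
  unfold cP
  rw [← Finsupp.sum_add]
  apply Finsupp.sum_congr
  intro u _
  rw [Finsupp.sum_add_index' (by simp) (by intro v c c'; rw [mul_add, Finsupp.single_add])]

lemma cP_smul_left (c : K) (x y : M →₀ K) : cP m (c • x) y = c • cP m x y := by
  unfold cP
  rw [Finsupp.sum_smul_index (by simp), Finsupp.smul_sum]
  apply Finsupp.sum_congr
  intro u _
  rw [Finsupp.smul_sum]
  apply Finsupp.sum_congr
  intro v _
  rw [Finsupp.smul_single, smul_eq_mul, mul_assoc]

lemma cP_smul_right (c : K) (x y : M →₀ K) : cP m x (c • y) = c • cP m x y := by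
  unfold cP
  rw [Finsupp.smul_sum]
  apply Finsupp.sum_congr
  intro u _
  rw [Finsupp.sum_smul_index (by simp), Finsupp.smul_sum]
  apply Finsupp.sum_congr
  intro v _
  rw [Finsupp.smul_single, smul_eq_mul, mul_left_comm]

lemma cP_sub_left (x x' y : M →₀ K) : cP m (x - x') y = cP m x y - cP m x' y := by
  have h := cP_add_left m (x - x') x' y
  rw [sub_add_cancel] at h
  rw [h]; abel

lemma cP_sub_right (x y y' : M →₀ K) : cP m x (y - y') = cP m x y - cP m x y' := by
  have h := cP_add_right m x (y - y') y'
  rw [sub_add_cancel] at h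
  rw [h]; abel

lemma cP_list_sum_right {β : Type*} (x : M →₀ K) (l : List β) (f : β → (M →₀ K)) :
    cP m x (l.map f).sum = (l.map fun e => cP m x (f e)).sum := by
  induction l with
  | nil => simp [cP_zero_right]
  | cons e l ih => simp [cP_add_right, ih]

lemma cP_list_sum_left {β : Type*} (l : List β) (f : β → (M →₀ K)) (y : M →₀ K) :
    cP m (l.map f).sum y = (l.map fun e => cP m (f e) y).sum := by
  induction l with
  | nil => simp [cP_zero_left]
  | cons e l ih => simp [cP_add_left, ih]

lemma cP_assoc (hm : ∀ a b c : M, m (m a b) c = m a (m b c)) (x y z : M →₀ K) :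
    cP m (cP m x y) z = cP m x (cP m y z) := by
  induction x using Finsupp.induction_linear with
  | zero => simp [cP_zero_left]
  | add f g hf hg => simp [cP_add_left, hf, hg]
  | single u c =>
    induction y using Finsupp.induction_linear with
    | zero => simp [cP_zero_left, cP_zero_right]
    | add f g hf hg => simp [cP_add_left, cP_add_right, hf, hg]
    | single v d =>
      induction z using Finsupp.induction_linear with
      | zero => simp [cP_zero_right]
      | add f g hf hg => simp [cP_add_right, hf, hg]
      | single w e =>
        rw [cP_single_single, cP_single_single, cP_single_single, cP_single_single, hm, mul_assoc]

end CP

section Main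
open Finsupp
variable {A K : Type*} [Field K]

/-- pair concatenation -/
def pm (p q : List A × List A) : List A × List A := (p.1 ++ q.1, p.2 ++ q.2)

noncomputable def D1 (K : Type*) [Field K] {A : Type*} (w : List A) : (List A × List A) →₀ K :=
  ((desh w).map (fun p => Finsupp.single p (1 : K))).sum

lemma Dsh_eq (x : List A →₀ K) : Dsh x = Finsupp.linearCombination K (D1 K) x := by
  rw [Finsupp.linearCombination_apply]; rfl

lemma concP_eq (x y : List A →₀ K) : concP x y = cP (fun u v => u ++ v) x y := rfl

lemma desh_len {w : List A} {p : List A × List A} (hp : p ∈ desh w) :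
    p.1.length + p.2.length = w.length := by
  induction w generalizing p with
  | nil => simp [desh] at hp; simp [hp]
  | cons a w ih =>
    simp only [desh, List.mem_append, List.mem_map] at hp
    rcases hp with ⟨q, hq, rfl⟩ | ⟨q, hq, rfl⟩ <;> simp [← ih hq] <;> omega

lemma D1_nil : D1 K ([] : List A) = Finsupp.single ([], []) 1 := by
  simp [D1, desh]

lemma D1_cons (a : A) (w : List A) :
    D1 K (a :: w) = cP pm (Finsupp.single ([a], ([] : List A)) 1
      + Finsupp.single (([] : List A), [a]) 1) (D1 K w) := by
  rw [cP_add_left]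
  unfold D1
  simp only [desh, List.map_append, List.sum_append, List.map_map]
  rw [cP_list_sum_right, cP_list_sum_right]
  congr 1 <;> refine congrArg List.sum (List.map_congr_left fun p _ => ?_) <;>
    simp [Function.comp, cP_single_single, pm]

lemma cP_pm_one_left (y : (List A × List A) →₀ K) :
    cP pm (Finsupp.single (([] : List A), ([] : List A)) 1) y = y := by
  calc cP pm (Finsupp.single (([] : List A), ([] : List A)) 1) y
      = y.sum fun v cv => Finsupp.single (pm ((([] : List A), ([] : List A))) v) (1 * cv) :=
        cP_single_left _ _ _ _
    _ = y.sum fun v cv => Finsupp.single v cv := Finsupp.sum_congr fun v _ => by simp [pm]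
    _ = y := Finsupp.sum_single y

lemma D1_append (u v : List A) : D1 K (u ++ v) = cP pm (D1 K u) (D1 K v) := by
  induction u with
  | nil => rw [List.nil_append, D1_nil, cP_pm_one_left]
  | cons a u ih =>
    rw [List.cons_append, D1_cons, D1_cons, ih, cP_assoc]
    intro p q r; simp [pm]

lemma Dsh_single (w : List A) (c : K) : Dsh (Finsupp.single w c) = c • D1 K w := by
  rw [Dsh_eq, Finsupp.linearCombination_single]

lemma Dsh_zero : Dsh (0 : List A →₀ K) = 0 := by
  simp only [Dsh_eq, map_zero]

lemma Dsh_add (x y : List A →₀ K) : Dsh (x + y) = Dsh x + Dsh y := by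
  simp only [Dsh_eq, map_add]

lemma Dsh_sub (x y : List A →₀ K) : Dsh (x - y) = Dsh x - Dsh y := by
  simp only [Dsh_eq, map_sub]

lemma Dsh_smul (c : K) (x : List A →₀ K) : Dsh (c • x) = c • Dsh x := by
  simp only [Dsh_eq, map_smul]

lemma Dsh_concP (x y : List A →₀ K) : Dsh (concP x y) = cP pm (Dsh x) (Dsh y) := by
  rw [concP_eq]
  induction x using Finsupp.induction_linear with
  | zero => rw [cP_zero_left, Dsh_zero, cP_zero_left]
  | add f g hf hg => rw [cP_add_left, Dsh_add, hf, hg, Dsh_add, cP_add_left]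
  | single u c =>
    induction y using Finsupp.induction_linear with
    | zero => rw [cP_zero_right, Dsh_zero, cP_zero_right]
    | add f g hf hg => rw [cP_add_right, Dsh_add, hf, hg, Dsh_add, cP_add_right]
    | single v d =>
      rw [cP_single_single, Dsh_single, Dsh_single, Dsh_single, D1_append,
        cP_smul_left, cP_smul_right, smul_smul]

/-- left tensoring by the empty word, as a linear map -/
noncomputable def Lmap (A K : Type*) [Field K] : (List A →₀ K) →ₗ[K] ((List A × List A) →₀ K) :=
  Finsupp.linearCombination K fun u => Finsupp.single ((([] : List A), u)) (1 : K)

noncomputable def Rmap (A K : Type*) [Field K] : (List A →₀ K) →ₗ[K] ((List A × List A) →₀ K) :=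
  Finsupp.linearCombination K fun u => Finsupp.single ((u, ([] : List A))) (1 : K)

lemma mapDomain_eq_L (x : List A →₀ K) :
    Finsupp.mapDomain (fun u => (([] : List A), u)) x = Lmap A K x := by
  rw [Lmap, Finsupp.linearCombination_apply, Finsupp.mapDomain]
  apply Finsupp.sum_congr
  intro u _
  rw [Finsupp.smul_single, smul_eq_mul, mul_one]

lemma mapDomain_eq_R (x : List A →₀ K) :
    Finsupp.mapDomain (fun u => (u, ([] : List A))) x = Rmap A K x := by
  rw [Rmap, Finsupp.linearCombination_apply, Finsupp.mapDomain]
  apply Finsupp.sum_congr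
  intro u _
  rw [Finsupp.smul_single, smul_eq_mul, mul_one]

lemma L_single (u : List A) (c : K) :
    Lmap A K (Finsupp.single u c) = Finsupp.single (([] : List A), u) c := by
  rw [Lmap, Finsupp.linearCombination_single, Finsupp.smul_single, smul_eq_mul, mul_one]

lemma R_single (u : List A) (c : K) :
    Rmap A K (Finsupp.single u c) = Finsupp.single ((u, ([] : List A))) c := by
  rw [Rmap, Finsupp.linearCombination_single, Finsupp.smul_single, smul_eq_mul, mul_one]

lemma cP_LL (x y : List A →₀ K) : cP pm (Lmap A K x) (Lmap A K y) = Lmap A K (concP x y) := by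
  rw [concP_eq]
  induction x using Finsupp.induction_linear with
  | zero => simp [cP_zero_left]
  | add f g hf hg => simp [cP_add_left, cP_add_right, map_add, hf, hg]
  | single u c =>
    induction y using Finsupp.induction_linear with
    | zero => simp [cP_zero_right]
    | add f g hf hg => simp [cP_add_right, map_add, hf, hg]
    | single v d => rw [L_single, L_single, cP_single_single, cP_single_single, L_single]; rfl

lemma cP_RR (x y : List A →₀ K) : cP pm (Rmap A K x) (Rmap A K y) = Rmap A K (concP x y) := by
  rw [concP_eq]
  induction x using Finsupp.induction_linear with
  | zero => simp [cP_zero_left]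
  | add f g hf hg => simp [cP_add_left, cP_add_right, map_add, hf, hg]
  | single u c =>
    induction y using Finsupp.induction_linear with
    | zero => simp [cP_zero_right]
    | add f g hf hg => simp [cP_add_right, map_add, hf, hg]
    | single v d => rw [R_single, R_single, cP_single_single, cP_single_single, R_single]; rfl

lemma cP_LR (x y : List A →₀ K) : cP pm (Lmap A K x) (Rmap A K y) = cP pm (Rmap A K y) (Lmap A K x) := by
  induction x using Finsupp.induction_linear with
  | zero => simp [cP_zero_left, cP_zero_right]
  | add f g hf hg => simp [cP_add_left, cP_add_right, map_add, hf, hg]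
  | single u c =>
    induction y using Finsupp.induction_linear with
    | zero => simp [cP_zero_left, cP_zero_right]
    | add f g hf hg => simp [cP_add_left, cP_add_right, map_add, hf, hg]
    | single v d =>
      rw [L_single, R_single, cP_single_single, cP_single_single, mul_comm]
      simp [pm]

lemma forward (x : List A →₀ K) (hx : IsLiePoly x) : IsPrimitive x := by
  induction hx with
  | zero =>
    rw [IsPrimitive, Dsh_zero, Finsupp.mapDomain_zero, Finsupp.mapDomain_zero, add_zero]
  | letter a =>
    rw [IsPrimitive, Dsh_single, Finsupp.mapDomain_single, Finsupp.mapDomain_single, one_smul]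
    rw [D1_cons, D1_nil, cP_add_left, cP_single_single, cP_single_single]
    simp [pm, add_comm]
  | add hx hy ihx ihy =>
    rw [IsPrimitive, Dsh_add, ihx, ihy, Finsupp.mapDomain_add, Finsupp.mapDomain_add]
    abel
  | smul c hx ihx =>
    rw [IsPrimitive, Dsh_smul, ihx, Finsupp.mapDomain_smul, Finsupp.mapDomain_smul, smul_add]
  | @bracket x y hx hy ihx ihy =>
    rw [IsPrimitive] at ihx ihy ⊢
    rw [mapDomain_eq_L, mapDomain_eq_R] at ihx ihy ⊢
    rw [Dsh_sub, Dsh_concP, Dsh_concP, ihx, ihy]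
    rw [cP_add_left, cP_add_right, cP_add_right, cP_add_left, cP_add_right, cP_add_right]
    rw [cP_LL, cP_RR, cP_LL, cP_RR, cP_LR x y, ← cP_LR y x]
    rw [map_sub, map_sub]
    abel

end Main

section Reverse
open Finsupp
open scoped Classical
variable {A K : Type*} [Field K]

noncomputable def Dyn (K : Type*) [Field K] {A : Type*} : List A → (List A →₀ K)
  | [] => 0
  | [a] => Finsupp.single [a] 1
  | a :: b :: t => concP (Finsupp.single [a] 1) (Dyn K (b :: t))
      - concP (Dyn K (b :: t)) (Finsupp.single [a] 1)

lemma Dyn_lie (w : List A) : IsLiePoly (Dyn K w) := by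
  induction w with
  | nil => exact IsLiePoly.zero
  | cons a w ih =>
    cases w with
    | nil => exact IsLiePoly.letter a
    | cons b t =>
      rw [Dyn]
      exact IsLiePoly.bracket (IsLiePoly.letter a) ih

lemma list_sum_map_add {β M : Type*} [AddCommGroup M] (l : List β) (f g : β → M) :
    (l.map fun e => f e + g e).sum = (l.map f).sum + (l.map g).sum := by
  induction l with
  | nil => simp
  | cons e l ih => simp only [List.map_cons, List.sum_cons, ih]; abel

lemma list_sum_map_neg {β M : Type*} [AddCommGroup M] (l : List β) (f : β → M) :
    (l.map fun e => - f e).sum = - (l.map f).sum := by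
  induction l with
  | nil => simp
  | cons e l ih => simp only [List.map_cons, List.sum_cons, ih]; abel

noncomputable def Fh (K : Type*) [Field K] {A : Type*} (p : List A × List A) : List A →₀ K :=
  ((-1 : K) ^ p.2.length) • Finsupp.single (p.1 ++ p.2.reverse) 1

noncomputable def Gh (K : Type*) [Field K] {A : Type*} (p : List A × List A) : List A →₀ K :=
  ((p.1.length : K) * (-1 : K) ^ p.2.length) • Finsupp.single (p.1 ++ p.2.reverse) 1

noncomputable def Fv (K : Type*) [Field K] {A : Type*} (w : List A) : List A →₀ K :=
  ((desh w).map (Fh K)).sum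

noncomputable def Gv (K : Type*) [Field K] {A : Type*} (w : List A) : List A →₀ K :=
  ((desh w).map (Gh K)).sum

lemma F_nil : Fv K ([] : List A) = Finsupp.single [] 1 := by
  simp [Fv, Fh, desh]

lemma G_nil : Gv K ([] : List A) = 0 := by
  simp [Gv, Gh, desh]

lemma F_cons (a : A) (w : List A) :
    Fv K (a :: w) = concP (Finsupp.single [a] 1) (Fv K w)
      - concP (Fv K w) (Finsupp.single [a] 1) := by
  rw [concP_eq, concP_eq, Fv, Fv, cP_list_sum_right, cP_list_sum_left]
  show (List.map (Fh K) (desh (a :: w))).sum = _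
  simp only [desh, List.map_append, List.sum_append, List.map_map]
  rw [sub_eq_add_neg, ← list_sum_map_neg]
  congr 1 <;> refine congrArg List.sum (List.map_congr_left fun p _ => ?_) <;>
    simp [Function.comp, Fh, cP_smul_right, cP_smul_left, cP_single_single, pow_succ,
      Finsupp.smul_single, mul_comm]

lemma G_cons (a : A) (w : List A) :
    Gv K (a :: w) = concP (Finsupp.single [a] 1) (Fv K w)
      + (concP (Finsupp.single [a] 1) (Gv K w) - concP (Gv K w) (Finsupp.single [a] 1)) := by
  have e1 : ∀ p : List A × List A, Gh K (a :: p.1, p.2)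
      = cP (fun u v : List A => u ++ v) (Finsupp.single [a] 1) (Fh K p)
        + cP (fun u v : List A => u ++ v) (Finsupp.single [a] 1) (Gh K p) := by
    intro p
    simp only [Gh, Fh, cP_smul_right, cP_single_single, Finsupp.smul_single, smul_eq_mul,
      mul_one, one_mul]
    have h1 : (a :: p.1, p.2).1 ++ (a :: p.1, p.2).2.reverse
        = [a] ++ (p.1 ++ p.2.reverse) := by simp
    rw [h1, ← Finsupp.single_add]
    congr 1
    push_cast [List.length_cons]
    ring
  have e2 : ∀ p : List A × List A, Gh K (p.1, a :: p.2)
      = - cP (fun u v : List A => u ++ v) (Gh K p) (Finsupp.single [a] 1) := by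
    intro p
    simp only [Gh, cP_smul_left, cP_single_single, Finsupp.smul_single, smul_eq_mul,
      mul_one, one_mul]
    have h1 : (p.1, a :: p.2).1 ++ (p.1, a :: p.2).2.reverse
        = (p.1 ++ p.2.reverse) ++ [a] := by simp
    rw [h1, ← Finsupp.single_neg]
    congr 1
    simp only [List.length_cons, pow_succ]
    ring
  rw [concP_eq, concP_eq, concP_eq, Fv, Gv, Gv, cP_list_sum_right, cP_list_sum_right,
    cP_list_sum_left]
  show (List.map (Gh K) (desh (a :: w))).sum = _
  simp only [desh, List.map_append, List.sum_append, List.map_map]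
  have m1 : List.map ((Gh K) ∘ fun p : List A × List A => (a :: p.1, p.2)) (desh w)
      = List.map (fun p : List A × List A =>
          cP (fun u v : List A => u ++ v) (Finsupp.single [a] 1) (Fh K p)
          + cP (fun u v : List A => u ++ v) (Finsupp.single [a] 1) (Gh K p)) (desh w) :=
    List.map_congr_left fun p _ => e1 p
  have m2 : List.map ((Gh K) ∘ fun p : List A × List A => (p.1, a :: p.2)) (desh w)
      = List.map (fun p : List A × List A =>
          - cP (fun u v : List A => u ++ v) (Gh K p) (Finsupp.single [a] 1)) (desh w) :=
    List.map_congr_left fun p _ => e2 p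
  rw [m1, m2, list_sum_map_add, list_sum_map_neg]
  abel

lemma F_eq_zero : ∀ w : List A, w ≠ [] → Fv K w = 0 := by
  intro w
  induction w with
  | nil => intro h; exact absurd rfl h
  | cons a w ih =>
    intro _
    rw [F_cons]
    cases w with
    | nil =>
      rw [F_nil, concP_eq, concP_eq, cP_single_single, cP_single_single]
      simp
    | cons b t =>
      rw [ih (by simp), concP_eq, concP_eq, cP_zero_right, cP_zero_left, sub_zero]

lemma G_eq_Dyn : ∀ w : List A, Gv K w = Dyn K w := by
  intro w
  induction w with
  | nil => rw [G_nil, Dyn]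
  | cons a w ih =>
    cases w with
    | nil =>
      rw [G_cons, G_nil, F_nil, Dyn, concP_eq, concP_eq, concP_eq, cP_single_single,
        cP_zero_right, cP_zero_left, sub_zero]
      simp
    | cons b t =>
      rw [G_cons, F_eq_zero _ (by simp), ih, concP_eq (K := K), cP_zero_right, zero_add, Dyn]

noncomputable def Hmap (A K : Type*) [Field K] :
    ((List A × List A) →₀ K) →ₗ[K] (List A →₀ K) :=
  Finsupp.linearCombination K (Gh K)

lemma H_D1 (w : List A) : Hmap A K (D1 K w) = Gv K w := by
  rw [Hmap, D1, map_list_sum, List.map_map, Gv]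
  refine congrArg List.sum (List.map_congr_left fun p _ => ?_)
  simp [Function.comp, Finsupp.linearCombination_single]

lemma key (x : List A →₀ K) (hx : IsPrimitive x) :
    (x.sum fun w c => c • Dyn K w)
      = x.sum fun w c => (c * (w.length : K)) • Finsupp.single w (1 : K) := by
  rw [IsPrimitive, mapDomain_eq_L, mapDomain_eq_R] at hx
  have h := congrArg (Hmap A K) hx
  rw [map_add] at h
  have h1 : Hmap A K (Dsh x) = x.sum fun w c => c • Dyn K w := by
    rw [Dsh_eq, Finsupp.linearCombination_apply, map_finsuppSum]
    exact Finsupp.sum_congr fun w _ => by rw [map_smul, H_D1, G_eq_Dyn]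
  have h2 : Hmap A K (Lmap A K x) = 0 := by
    rw [Lmap, Finsupp.linearCombination_apply, map_finsuppSum, Finsupp.sum]
    apply Finset.sum_eq_zero
    intro w _
    rw [map_smul, Hmap, Finsupp.linearCombination_single]
    simp [Gh]
  have h3 : Hmap A K (Rmap A K x)
      = x.sum fun w c => (c * (w.length : K)) • Finsupp.single w (1 : K) := by
    rw [Rmap, Finsupp.linearCombination_apply, map_finsuppSum]
    refine Finsupp.sum_congr fun w _ => ?_
    rw [map_smul, Hmap, Finsupp.linearCombination_single, one_smul, Gh]
    simp [smul_smul]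
  rw [← h1, h, h2, h3, zero_add]

noncomputable def Pg (K : Type*) [Field K] {A : Type*} (n : ℕ) :
    (List A →₀ K) →ₗ[K] (List A →₀ K) :=
  Finsupp.linearCombination K fun w => if w.length = n then Finsupp.single w (1 : K) else 0

noncomputable def Qg (K : Type*) [Field K] {A : Type*} (n : ℕ) :
    ((List A × List A) →₀ K) →ₗ[K] ((List A × List A) →₀ K) :=
  Finsupp.linearCombination K fun p =>
    if p.1.length + p.2.length = n then Finsupp.single p (1 : K) else 0

lemma Qg_D1 (n : ℕ) (w : List A) :
    Qg K n (D1 K w) = if w.length = n then D1 K w else 0 := by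
  by_cases h : w.length = n
  · rw [if_pos h]
    conv_lhs => rw [D1]
    rw [Qg, map_list_sum, List.map_map, D1]
    refine congrArg List.sum (List.map_congr_left fun p hp => ?_)
    simp [Function.comp, Finsupp.linearCombination_single, desh_len hp, h]
  · rw [if_neg h, D1, Qg, map_list_sum, List.map_map]
    apply List.sum_eq_zero
    intro e he
    obtain ⟨p, hp, rfl⟩ := List.mem_map.mp he
    simp [Function.comp, Finsupp.linearCombination_single, desh_len hp, h]

lemma Qg_Dsh (n : ℕ) (x : List A →₀ K) : Qg K n (Dsh x) = Dsh (Pg K n x) := by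
  induction x using Finsupp.induction_linear with
  | zero => rw [Dsh_zero, map_zero, map_zero, Dsh_zero]
  | add f g hf hg => rw [Dsh_add, map_add, hf, hg, map_add, Dsh_add]
  | single w c =>
    rw [Dsh_single, map_smul, Qg_D1, Pg, Finsupp.linearCombination_single]
    by_cases h : w.length = n
    · rw [if_pos h, if_pos h, Dsh_eq, map_smul, ← Dsh_eq, Dsh_single, one_smul]
    · rw [if_neg h, if_neg h, smul_zero, smul_zero, Dsh_zero]

lemma Qg_L (n : ℕ) (x : List A →₀ K) : Qg K n (Lmap A K x) = Lmap A K (Pg K n x) := by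
  induction x using Finsupp.induction_linear with
  | zero => rw [map_zero, map_zero, map_zero, map_zero]
  | add f g hf hg => rw [map_add, map_add, hf, hg, map_add, map_add]
  | single u c =>
    rw [L_single, Qg, Finsupp.linearCombination_single, Pg, Finsupp.linearCombination_single,
      map_smul]
    by_cases h : u.length = n
    · rw [if_pos (by simpa using h), if_pos h, L_single]
    · rw [if_neg (by simpa using h), if_neg h, map_zero]

lemma Qg_R (n : ℕ) (x : List A →₀ K) : Qg K n (Rmap A K x) = Rmap A K (Pg K n x) := by
  induction x using Finsupp.induction_linear with
  | zero => rw [map_zero, map_zero, map_zero, map_zero]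
  | add f g hf hg => rw [map_add, map_add, hf, hg, map_add, map_add]
  | single u c =>
    rw [R_single, Qg, Finsupp.linearCombination_single, Pg, Finsupp.linearCombination_single,
      map_smul]
    by_cases h : u.length = n
    · rw [if_pos (by simpa using h), if_pos h, R_single]
    · rw [if_neg (by simpa using h), if_neg h, map_zero]

lemma Pg_primitive (n : ℕ) (x : List A →₀ K) (hx : IsPrimitive x) :
    IsPrimitive (Pg K n x) := by
  rw [IsPrimitive, mapDomain_eq_L, mapDomain_eq_R] at hx ⊢
  rw [← Qg_Dsh, hx, map_add, Qg_L, Qg_R]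

lemma Pg_supp (n : ℕ) (x : List A →₀ K) : ∀ w ∈ (Pg K n x).support, w.length = n := by
  intro w hw
  by_contra h
  apply Finsupp.mem_support_iff.mp hw
  rw [Pg, Finsupp.linearCombination_apply, Finsupp.sum_apply, Finsupp.sum]
  apply Finset.sum_eq_zero
  intro u _
  by_cases hu : u.length = n
  · have hne : u ≠ w := fun e => h (e ▸ hu)
    simp [hu, Finsupp.single_apply, hne]
  · simp [hu]

lemma decomp (x : List A →₀ K) :
    ∑ n ∈ x.support.image List.length, Pg K n x = x := by
  have h1 : ∀ n : ℕ, Pg K n x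
      = ∑ w ∈ x.support, x w • (if w.length = n then Finsupp.single w (1 : K) else 0) := by
    intro n; rw [Pg, Finsupp.linearCombination_apply, Finsupp.sum]
  calc ∑ n ∈ x.support.image List.length, Pg K n x
      = ∑ n ∈ x.support.image List.length, ∑ w ∈ x.support,
          x w • (if w.length = n then Finsupp.single w (1 : K) else 0) :=
        Finset.sum_congr rfl fun n _ => h1 n
    _ = ∑ w ∈ x.support, ∑ n ∈ x.support.image List.length,
          x w • (if w.length = n then Finsupp.single w (1 : K) else 0) := Finset.sum_comm
    _ = ∑ w ∈ x.support, Finsupp.single w (x w) := by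
        refine Finset.sum_congr rfl fun w hw => ?_
        rw [← Finset.smul_sum, Finset.sum_ite_eq,
          if_pos (Finset.mem_image_of_mem _ hw), Finsupp.smul_single, smul_eq_mul, mul_one]
    _ = x := Finsupp.sum_single x

noncomputable def ev2 (A K : Type*) [Field K] : ((List A × List A) →₀ K) →ₗ[K] K :=
  Finsupp.linearCombination K fun p : List A × List A =>
    if p = (([] : List A), ([] : List A)) then (1 : K) else 0

lemma pick (x : List A →₀ K) :
    (x.sum fun w c => c * (if w = [] then (1 : K) else 0)) = x [] := by
  rw [Finsupp.sum]
  have h : ∀ w ∈ x.support, x w * (if w = [] then (1 : K) else 0)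
      = if w = [] then x w else 0 := fun w _ => by split <;> simp
  rw [Finset.sum_congr rfl h, Finset.sum_ite_eq' x.support ([] : List A) (fun w => x w)]
  by_cases hmem : ([] : List A) ∈ x.support
  · rw [if_pos hmem]
  · rw [if_neg hmem, Finsupp.notMem_support_iff.mp hmem]

lemma ev2_D1 (w : List A) : ev2 A K (D1 K w) = if w = [] then 1 else 0 := by
  rw [ev2, D1, map_list_sum, List.map_map]
  by_cases h : w = []
  · subst h; simp [desh, Finsupp.linearCombination_single]
  · rw [if_neg h]
    apply List.sum_eq_zero
    intro e he
    obtain ⟨p, hp, rfl⟩ := List.mem_map.mp he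
    have hlen := desh_len hp
    have hne : p ≠ (([] : List A), ([] : List A)) := by
      intro e
      rw [e] at hlen
      simp at hlen
      exact h (List.length_eq_zero_iff.mp hlen.symm)
    simp [Function.comp, Finsupp.linearCombination_single, hne]

lemma prim_nil (x : List A →₀ K) (hx : IsPrimitive x) : x [] = 0 := by
  rw [IsPrimitive, mapDomain_eq_L, mapDomain_eq_R] at hx
  have h := congrArg (ev2 A K) hx
  rw [map_add] at h
  have h1 : ev2 A K (Dsh x) = x [] := by
    rw [Dsh_eq, Finsupp.linearCombination_apply, map_finsuppSum, ← pick x]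
    exact Finsupp.sum_congr fun w _ => by rw [map_smul, ev2_D1, smul_eq_mul]
  have h2 : ev2 A K (Lmap A K x) = x [] := by
    rw [Lmap, Finsupp.linearCombination_apply, map_finsuppSum, ← pick x]
    refine Finsupp.sum_congr fun w _ => ?_
    rw [map_smul, ev2, Finsupp.linearCombination_single, smul_eq_mul, smul_eq_mul, one_mul]
    simp
  have h3 : ev2 A K (Rmap A K x) = x [] := by
    rw [Rmap, Finsupp.linearCombination_apply, map_finsuppSum, ← pick x]
    refine Finsupp.sum_congr fun w _ => ?_
    rw [map_smul, ev2, Finsupp.linearCombination_single, smul_eq_mul, smul_eq_mul, one_mul]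
    simp [Prod.ext_iff]
  rw [h1, h2, h3] at h
  exact (left_eq_add.mp h)

lemma sum_dyn_lie (y : List A →₀ K) : IsLiePoly (y.sum fun w c => c • Dyn K w) := by
  rw [Finsupp.sum]
  apply Finset.sum_induction _ _ (fun a b ha hb => IsLiePoly.add ha hb) IsLiePoly.zero
  intro w _
  exact IsLiePoly.smul _ (Dyn_lie w)

lemma homog [CharZero K] (n : ℕ) (hn : 0 < n) (x : List A →₀ K) (hx : IsPrimitive x)
    (hs : ∀ w ∈ x.support, w.length = n) : IsLiePoly x := by
  have hk := key x hx
  have h2 : (x.sum fun w c => (c * (w.length : K)) • Finsupp.single w (1 : K))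
      = (n : K) • x := by
    have hc : ∀ w ∈ x.support, (x w * (w.length : K)) • Finsupp.single w (1 : K)
        = (n : K) • (x w • Finsupp.single w (1 : K)) := by
      intro w hw; rw [hs w hw, smul_smul, mul_comm]
    rw [Finsupp.sum_congr (g2 := fun w c => (n : K) • (c • Finsupp.single w (1 : K))) hc,
      ← Finsupp.smul_sum]
    congr 1
    conv_rhs => rw [← Finsupp.sum_single x]
    exact Finsupp.sum_congr fun w _ => by rw [Finsupp.smul_single, smul_eq_mul, mul_one]
  have hnz : (n : K) ≠ 0 := Nat.cast_ne_zero.mpr hn.ne'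
  have hx2 : x = (n : K)⁻¹ • (x.sum fun w c => c • Dyn K w) := by
    rw [hk, h2, inv_smul_smul₀ hnz]
  rw [hx2]
  exact IsLiePoly.smul _ (sum_dyn_lie x)

end Reverse


/-- Friedrichs' criterion: over a field of characteristic zero, an element of the
word algebra is a Lie polynomial if and only if it is primitive for the deshuffle
coproduct. -/
theorem friedrichs_criterion {A K : Type*} [Field K] [CharZero K] :
    ∀ x : List A →₀ K, IsLiePoly x ↔ IsPrimitive x := by
  intro x
  constructor
  · exact forward x
  · intro hx
    rw [← decomp x]
    apply Finset.sum_induction _ _ (fun a b ha hb => IsLiePoly.add ha hb) IsLiePoly.zero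
    intro n hn
    have hpos : 0 < n := by
      obtain ⟨w, hw, rfl⟩ := Finset.mem_image.mp hn
      cases w with
      | nil => exact absurd (prim_nil x hx) (Finsupp.mem_support_iff.mp hw)
      | cons a t => simp
    exact homog n hpos _ (Pg_primitive n x hx) (Pg_supp n x)
end

section
/- In any D-algebra (A, ·, ▷), the set of derivations 𝒟(A) = {x : x ▷ (a·b) = (x ▷ a)·b + a·(x ▷ b) for all a,b} is a linear subspace of A, and it is closed under the bracket ⟦x,y⟧ = x ▷ y − y ▷ x + x·y − y·x. -/
/-- `x` is a derivation of the associative product with respect to `▷`. -/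
def IsDer {K A : Type*} [Field K] [Ring A] [Algebra K A]
    (t : A →ₗ[K] A →ₗ[K] A) (x : A) : Prop :=
  ∀ a b : A, t x (a * b) = t x a * b + a * t x b

/-- In any D-algebra `(A, ·, ▷)` the set of derivations
`𝒟(A) = {x : x ▷ (a·b) = (x ▷ a)·b + a·(x ▷ b)}` is a linear subspace of `A`, and it
is closed under the bracket `⟦x,y⟧ = x ▷ y − y ▷ x + x·y − y·x`. -/
theorem Dalgebra_derivations_subspace_bracket_closed
    {K A : Type*} [Field K] [CharZero K] [Ring A] [Algebra K A]
    (t : A →ₗ[K] A →ₗ[K] A)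
    (hunit : ∀ a : A, t 1 a = a)
    (hclosed : ∀ (a x : A), IsDer t x → IsDer t (t a x))
    (hcomp : ∀ (x a b : A), IsDer t x → t x (t a b) = t (x * a) b + t (t x a) b) :
    IsDer t (0 : A) ∧
    (∀ x y : A, IsDer t x → IsDer t y → IsDer t (x + y)) ∧
    (∀ (c : K) (x : A), IsDer t x → IsDer t (c • x)) ∧
    (∀ x y : A, IsDer t x → IsDer t y →
      IsDer t (t x y - t y x + (x * y - y * x))) := by
  refine ⟨?_, ?_, ?_, ?_⟩
  · intro a b; simp
  · intro x y hx hy a b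
    simp only [map_add, LinearMap.add_apply, hx a b, hy a b, add_mul, mul_add]
    abel
  · intro c x hx a b
    simp only [map_smul, LinearMap.smul_apply, hx a b, smul_add, smul_mul_assoc,
      mul_smul_comm]
  · intro x y hx hy
    have haux : ∀ c : A, t (t x y - t y x + (x * y - y * x)) c
        = t x (t y c) - t y (t x c) := by
      intro c
      have h1 := hcomp x y c hx
      have h2 := hcomp y x c hy
      simp only [map_add, map_sub, LinearMap.add_apply, LinearMap.sub_apply]
      rw [h1, h2]; abel
    intro a b
    rw [haux, haux, haux, hx a b, hy a b, map_add, map_add, hx, hx, hy, hy]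
    simp only [sub_mul, mul_sub, add_mul, mul_add]
    abel
end

section
/- In a D-algebra, the set of derivations 𝒟(A) equipped with the restriction of ▷ and the commutator Lie bracket [x,y] = x·y − y·x forms a post-Lie algebra. -/
/-- In a D-algebra, the set of derivations `𝒟(A)` equipped with the restriction of `▷`
and the commutator Lie bracket `[x,y] = x·y − y·x` forms a post-Lie algebra:
`𝒟(A)` is closed under `▷`, and the two post-Lie axioms hold on `𝒟(A)`. -/
theorem Dalgebra_derivations_postLie
    {K A : Type*} [Field K] [CharZero K] [Ring A] [Algebra K A]
    (t : A →ₗ[K] A →ₗ[K] A)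
    (hunit : ∀ a : A, t 1 a = a)
    (hclosed : ∀ (a x : A), IsDer t x → IsDer t (t a x))
    (hcomp : ∀ (x a b : A), IsDer t x → t x (t a b) = t (x * a) b + t (t x a) b)
    (hbr : ∀ x y : A, IsDer t x → IsDer t y → IsDer t (x * y - y * x)) :
    (∀ x y : A, IsDer t x → IsDer t y → IsDer t (t x y)) ∧
    (∀ x y z : A, IsDer t x → IsDer t y → IsDer t z →
      t x (y * z - z * y) = (t x y * z - z * t x y) + (y * t x z - t x z * y)) ∧
    (∀ x y z : A, IsDer t x → IsDer t y → IsDer t z →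
      t (x * y - y * x) z
        = t x (t y z) - t (t x y) z - t y (t x z) + t (t y x) z) := by
  refine ⟨fun x y hx hy => hclosed x y hy, ?_, ?_⟩
  · intro x y z hx hy hz
    rw [map_sub, hx y z, hx z y]
    abel
  · intro x y z hx hy hz
    rw [map_sub, LinearMap.sub_apply, hcomp x y z hx, hcomp y x z hy]
    abel
end

section
/- Given an operad P with composition dualized to a map Δ: P → T(P) ⊗ P via ⟨x₁⋯x_n ∘ x, x'⟩ = ⟨x₁⋯x_n ⊗ x, Δ(x')⟩ (assuming each P(n) finite-dimensional with chosen basis), the multiplicative extension of Δ to the tensor algebra T(P) with concatenation product is coassociative; i.e., (T(P), concatenation, Δ) is a bialgebra. -/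
/-- Words in the basis elements of an operad `P` whose component `P(n)` has (finite)
basis `B n`: a basis of the tensor algebra `T(P)`. -/
abbrev OpWord (B : ℕ → Type) : Type := List (Σ n, B n)

/-- The composition `x₁ ⋯ x_n ∘ b` of a word of basis elements into a single basis
element `b ∈ B n`, expressed via the structure coefficients `c` of the operadic
composition in the chosen bases; zero when the arities do not match. -/
noncomputable def letterComp {K : Type} [Field K] {B : ℕ → Type} [∀ n, Fintype (B n)]
    (c : ∀ {n : ℕ} (k : Fin n → ℕ), (∀ i, B (k i)) → B n → B (∑ i, k i) → K)
    (u : OpWord B) {n : ℕ} (b : B n) : (Σ m, B m) →₀ K :=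
  if h : u.length = n then
    ∑ b' : B (∑ i : Fin n, (u.get (Fin.cast h.symm i)).1),
      Finsupp.single ⟨∑ i : Fin n, (u.get (Fin.cast h.symm i)).1, b'⟩
        (c (fun i => (u.get (Fin.cast h.symm i)).1)
           (fun i => (u.get (Fin.cast h.symm i)).2) b b')
  else 0

/-- The composition `u ∘ v` of words of basis elements (the multiplicative, i.e.
word-by-word, extension of the operadic composition), as an element of the free
vector space on words; dually, its coefficients are the coefficients of the
coproduct `Δ` on `T(P)` obtained by dualizing operadic composition. -/
noncomputable def wordComp {K : Type} [Field K] {B : ℕ → Type} [∀ n, Fintype (B n)]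
    [∀ n, DecidableEq (B n)]
    (c : ∀ {n : ℕ} (k : Fin n → ℕ), (∀ i, B (k i)) → B n → B (∑ i, k i) → K) :
    OpWord B → OpWord B → (OpWord B →₀ K)
  | u, [] => if u = [] then Finsupp.single ([] : OpWord B) 1 else 0
  | u, ⟨n, b⟩ :: v =>
      (letterComp c (u.take n) b).sum fun a ca =>
        (wordComp c (u.drop n) v).sum fun w cw => Finsupp.single (a :: w) (ca * cw)
termination_by u v => v.length

section Aux
variable {K : Type} [Field K] {B : ℕ → Type} [∀ n, Fintype (B n)] [∀ n, DecidableEq (B n)]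
variable (c : ∀ {n : ℕ} (k : Fin n → ℕ), (∀ i, B (k i)) → B n → B (∑ i, k i) → K)

/-- Total arity of a word. -/
def aritySum (v : OpWord B) : ℕ := (v.map Sigma.fst).sum

lemma aritySum_cons (x : Σ n, B n) (v : OpWord B) :
    aritySum (x :: v) = x.1 + aritySum v := by simp [aritySum]

lemma aritySum_fin (v : OpWord B) : aritySum v = ∑ i : Fin v.length, (v.get i).1 := by
  conv_lhs => rw [aritySum, ← List.ofFn_get v]
  simp

lemma wordComp_nil (u : OpWord B) :
    wordComp c u [] = if u = [] then Finsupp.single ([] : OpWord B) (1:K) else 0 := by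
  rw [wordComp]

lemma wordComp_cons (u : OpWord B) {n : ℕ} (b : B n) (v : OpWord B) :
    wordComp c u (⟨n, b⟩ :: v) = (letterComp c (u.take n) b).sum fun a ca =>
      (wordComp c (u.drop n) v).sum fun w cw => Finsupp.single (a :: w) (ca * cw) := by
  rw [wordComp]

lemma letterComp_eq_zero {u : OpWord B} {n : ℕ} {b : B n} (h : u.length ≠ n) :
    letterComp c u b = 0 := by
  rw [letterComp, dif_neg h]

lemma letterComp_fst {u : OpWord B} {n : ℕ} {b : B n} {a : Σ m, B m}
    (ha : a ∈ (letterComp c u b).support) : a.1 = aritySum u := by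
  rw [letterComp] at ha
  split_ifs at ha with h
  · have h2 := Finsupp.support_finset_sum ha
    simp only [Finset.mem_biUnion, Finset.mem_univ, true_and] at h2
    obtain ⟨b', hb'⟩ := h2
    have h3 := Finsupp.support_single_subset hb'
    simp only [Finset.mem_singleton] at h3
    subst h3
    show (∑ i : Fin n, (u.get (Fin.cast h.symm i)).1) = aritySum u
    rw [aritySum_fin]
    exact Fintype.sum_equiv (finCongr h.symm) _ _ (fun i => rfl)
  · simp at ha

lemma pair_sum_general {α β γ M : Type*} [AddCommMonoid M] (f : α →₀ K) (g : β →₀ K)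
    (ϕ : α → β → γ) (h : γ → K → M) (h0 : ∀ x, h x 0 = 0)
    (hadd : ∀ x y z, h x (y + z) = h x y + h x z) :
    (f.sum fun a ca => g.sum fun b cb => Finsupp.single (ϕ a b) (ca * cb)).sum h
      = f.sum fun a ca => g.sum fun b cb => h (ϕ a b) (ca * cb) := by
  rw [Finsupp.sum_sum_index h0 hadd]
  refine Finsupp.sum_congr fun a _ => ?_
  rw [Finsupp.sum_sum_index h0 hadd]
  exact Finsupp.sum_congr fun b _ => Finsupp.sum_single_index (h0 _)

lemma single_sum_general {α β M : Type*} [AddCommMonoid M] (f : α →₀ K) (ϕ : α → β)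
    (h : β → K → M) (h0 : ∀ x, h x 0 = 0)
    (hadd : ∀ x y z, h x (y + z) = h x y + h x z) :
    (f.sum fun a ca => Finsupp.single (ϕ a) ca).sum h = f.sum fun a ca => h (ϕ a) ca := by
  rw [Finsupp.sum_sum_index h0 hadd]
  exact Finsupp.sum_congr fun a _ => Finsupp.sum_single_index (h0 _)

lemma cons_pair_apply (f : (Σ n, B n) →₀ K) (g : OpWord B →₀ K) (a₀ : Σ n, B n) (t : OpWord B) :
    (f.sum fun a ca => g.sum fun r cr => Finsupp.single (a :: r) (ca * cr)) (a₀ :: t)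
      = f a₀ * g t := by
  classical
  have key : ∀ (a : Σ n, B n) (ca : K) (r : OpWord B) (cr : K),
      (Finsupp.single (a :: r) (ca * cr) : OpWord B →₀ K) (a₀ :: t)
        = (if a = a₀ then ca else 0) * (if r = t then cr else 0) := by
    intro a ca r cr
    simp only [Finsupp.single_apply, List.cons.injEq]
    split_ifs with h1 h2 h3 <;> simp_all
  rw [Finsupp.sum_apply]
  have step1 : (f.sum fun a ca => (g.sum fun r cr =>
        (Finsupp.single (a :: r) (ca * cr) : OpWord B →₀ K)) (a₀ :: t))
      = f.sum fun a ca => (if a = a₀ then ca else 0) * g t := by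
    refine Finsupp.sum_congr fun a _ => ?_
    simp only [Finsupp.sum_apply, key]
    rw [← Finsupp.mul_sum, Finsupp.sum_ite_eq' g t fun _ cr => cr]
    by_cases ht : t ∈ g.support
    · rw [if_pos ht]
    · rw [if_neg ht, Finsupp.notMem_support_iff.mp ht]
  rw [step1, ← Finsupp.sum_mul, Finsupp.sum_ite_eq' f a₀ fun _ ca => ca]
  split_ifs with h
  · rfl
  · rw [Finsupp.notMem_support_iff.mp h, zero_mul]

lemma cons_pair_apply_nil (f : (Σ n, B n) →₀ K) (g : OpWord B →₀ K) :
    (f.sum fun a ca => g.sum fun r cr => Finsupp.single (a :: r) (ca * cr)) ([] : OpWord B)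
      = 0 := by
  simp only [Finsupp.sum_apply]
  refine Finset.sum_eq_zero fun a _ => ?_
  refine Finset.sum_eq_zero fun r _ => ?_
  simp [Finsupp.single_apply]

lemma wordComp_cons_apply (u : OpWord B) {n : ℕ} (b : B n) (v : OpWord B)
    (a₀ : Σ m, B m) (t : OpWord B) :
    (wordComp c u (⟨n, b⟩ :: v)) (a₀ :: t)
      = (letterComp c (u.take n) b) a₀ * (wordComp c (u.drop n) v) t := by
  rw [wordComp_cons]; exact cons_pair_apply _ _ _ _

lemma wordComp_cons_apply_nil (u : OpWord B) {n : ℕ} (b : B n) (v : OpWord B) :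
    (wordComp c u (⟨n, b⟩ :: v)) ([] : OpWord B) = 0 := by
  rw [wordComp_cons]; exact cons_pair_apply_nil _ _

lemma wordComp_support_length :
    ∀ (v u s : OpWord B), s ∈ (wordComp c u v).support → s.length = v.length := by
  intro v
  induction v with
  | nil =>
    intro u s hs
    rw [wordComp_nil] at hs
    split_ifs at hs with h
    · have := Finsupp.support_single_subset hs
      simp only [Finset.mem_singleton] at this
      subst this; rfl
    · simp at hs
  | cons x v ih =>
    obtain ⟨n, b⟩ := x
    intro u s hs
    rw [wordComp_cons] at hs
    have h1 := Finsupp.support_sum hs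
    simp only [Finset.mem_biUnion] at h1
    obtain ⟨a, _, h2⟩ := h1
    have h3 := Finsupp.support_sum h2
    simp only [Finset.mem_biUnion] at h3
    obtain ⟨r, hr, h4⟩ := h3
    have h5 := Finsupp.support_single_subset h4
    simp only [Finset.mem_singleton] at h5
    subst h5
    simp [ih _ _ hr]

lemma wordComp_singleton_factor (u : OpWord B) {k : ℕ} (b₀ : B k) (r : OpWord B)
    (a : Σ m, B m) (t : OpWord B) :
    (wordComp c u (⟨k, b₀⟩ :: r)) (a :: t)
      = (wordComp c (u.take k) [⟨k, b₀⟩]) [a] * (wordComp c (u.drop k) r) t := by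
  have h2 : (wordComp c (u.take k) [⟨k, b₀⟩]) [a] = (letterComp c (u.take k) b₀) a := by
    rw [wordComp_cons_apply, List.take_take, min_self,
      List.drop_eq_nil_of_le (by rw [List.length_take]; exact min_le_left _ _),
      wordComp_nil, if_pos rfl]
    simp
  rw [wordComp_cons_apply, h2]

lemma wordComp_singleton_zero {s : OpWord B} {n : ℕ} (b : B n) (h : s.length ≠ n) :
    wordComp c s [⟨n, b⟩] = 0 := by
  rw [wordComp_cons]
  rcases lt_or_gt_of_ne h with hlt | hgt
  · rw [List.take_of_length_le hlt.le, letterComp_eq_zero c h, Finsupp.sum_zero_index]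
  · have hd : s.drop n ≠ [] := by
      intro hd
      have h2 : (s.drop n).length = s.length - n := List.length_drop
      rw [hd] at h2
      simp at h2
      omega
    rw [wordComp_nil, if_neg hd]
    simp

lemma wordComp_singleton_eq {s : OpWord B} {n : ℕ} (b : B n) (h : s.length = n) :
    wordComp c s [⟨n, b⟩] = (letterComp c s b).sum fun a ca => Finsupp.single [a] ca := by
  rw [wordComp_cons, List.take_of_length_le h.le, List.drop_eq_nil_of_le h.le, wordComp_nil,
    if_pos rfl]
  refine Finsupp.sum_congr fun a _ => ?_
  rw [Finsupp.sum_single_index (by simp)]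
  simp

lemma wordComp_split (u v₁ v₂ : OpWord B) :
    wordComp c u (v₁ ++ v₂)
      = (wordComp c (u.take (aritySum v₁)) v₁).sum fun s₁ c₁ =>
          (wordComp c (u.drop (aritySum v₁)) v₂).sum fun s₂ c₂ =>
            Finsupp.single (s₁ ++ s₂) (c₁ * c₂) := by
  induction v₁ generalizing u with
  | nil =>
    simp only [List.nil_append, aritySum, List.map_nil, List.sum_nil, List.take_zero,
      List.drop_zero]
    rw [wordComp_nil, if_pos rfl,
      Finsupp.sum_single_index (by simp)]
    simp only [one_mul, List.nil_append]
    exact (Finsupp.sum_single _).symm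
  | cons x v₁ ih =>
    obtain ⟨n, b⟩ := x
    rw [List.cons_append, wordComp_cons, wordComp_cons, aritySum_cons]
    simp only
    -- rewrite the lists on the RHS
    rw [List.take_take, min_eq_left (Nat.le_add_right n (aritySum v₁)),
      List.drop_take, Nat.add_sub_cancel_left, ← List.drop_drop]
    -- expand the inner composition on the LHS via the induction hypothesis
    rw [ih (u.drop n)]
    -- flatten the RHS
    rw [pair_sum_general (letterComp c (u.take n) b)
      (wordComp c ((u.drop n).take (aritySum v₁)) v₁) (fun a w => a :: w)
      (fun x cx => (wordComp c ((u.drop n).drop (aritySum v₁)) v₂).sum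
        fun s₂ c₂ => Finsupp.single (x ++ s₂) (cx * c₂))
      (fun x => by simp)
      (fun x y z => by
        rw [← Finsupp.sum_add]
        exact Finsupp.sum_congr fun s₂ _ => by rw [add_mul, Finsupp.single_add])]
    -- flatten the LHS
    refine Eq.trans (Finsupp.sum_congr
      (g2 := fun a ca =>
        (wordComp c ((u.drop n).take (aritySum v₁)) v₁).sum fun s₁ c₁ =>
          (wordComp c ((u.drop n).drop (aritySum v₁)) v₂).sum fun s₂ c₂ =>
            Finsupp.single (a :: (s₁ ++ s₂)) (ca * (c₁ * c₂)))
      fun a _ => pair_sum_general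
      (wordComp c ((u.drop n).take (aritySum v₁)) v₁)
      (wordComp c ((u.drop n).drop (aritySum v₁)) v₂) (fun s₁ s₂ => s₁ ++ s₂)
      (fun w cw => Finsupp.single (a :: w) ((letterComp c (u.take n) b) a * cw))
      (fun w => by simp)
      (fun w y z => by rw [mul_add, Finsupp.single_add])) ?_
    refine Finsupp.sum_congr fun a _ => Finsupp.sum_congr fun s₁ _ =>
      Finsupp.sum_congr fun s₂ _ => ?_
    rw [List.cons_append, mul_assoc]

end Aux


/-- Foissy's construction: the coproduct `Δ` on `T(P)` dual to operadic composition,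
defined by `⟨x₁⋯x_n ∘ x, x'⟩ = ⟨x₁⋯x_n ⊗ x, Δ(x')⟩` and extended multiplicatively to
the tensor algebra, is coassociative, so `(T(P), concatenation, Δ)` is a bialgebra.
Coassociativity of `Δ` is stated here in its equivalent paired form: the associativity
of word composition `⟨(u ∘ v) ∘ w, t⟩ = ⟨u ∘ (v ∘ w), t⟩`, which holds for all words
`u, v, w` assuming the operad axioms (identity element, and associativity of
composition into a single operad element). -/
theorem operad_dual_coproduct_coassociative {K : Type} [Field K] [CharZero K]
    {B : ℕ → Type} [∀ n, Fintype (B n)] [∀ n, DecidableEq (B n)]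
    (c : ∀ {n : ℕ} (k : Fin n → ℕ), (∀ i, B (k i)) → B n → B (∑ i, k i) → K)
    (e : B 1)
    (hidR : ∀ (n : ℕ) (b : B n),
      wordComp c [⟨n, b⟩] [⟨1, e⟩] = Finsupp.single [⟨n, b⟩] 1)
    (hidL : ∀ (n : ℕ) (b : B n),
      wordComp c (List.replicate n ⟨1, e⟩) [⟨n, b⟩] = Finsupp.single [⟨n, b⟩] 1)
    (hassoc : ∀ (u v : OpWord B) (n : ℕ) (b : B n) (t : OpWord B),
      (wordComp c u v).sum (fun s cs => cs * wordComp c s [⟨n, b⟩] t)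
        = (wordComp c v [⟨n, b⟩]).sum (fun s cs => cs * wordComp c u s t)) :
    ∀ u v w t : OpWord B,
      (wordComp c u v).sum (fun s cs => cs * wordComp c s w t)
        = (wordComp c v w).sum (fun s cs => cs * wordComp c u s t) := by
  intro u v w t
  induction w generalizing u v t with
  | nil =>
    rcases v with _ | ⟨x, v'⟩
    · -- v = []
      have h00 : wordComp c ([] : OpWord B) ([] : OpWord B)
          = Finsupp.single ([] : OpWord B) (1 : K) := by
        rw [wordComp_nil, if_pos rfl]
      rw [h00, Finsupp.sum_single_index (by rw [zero_mul])]
      by_cases hu : u = []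
      · subst hu
        rw [h00, Finsupp.sum_single_index (by rw [zero_mul]), h00]
      · rw [wordComp_nil c u, if_neg hu, Finsupp.sum_zero_index]
        rw [Finsupp.coe_zero, Pi.zero_apply, mul_zero]
    · -- v = x :: v'
      have hL : (wordComp c u (x :: v')).sum
          (fun s cs => cs * (wordComp c s []) t) = 0 := by
        refine Finset.sum_eq_zero fun s hs => ?_
        have hlen := wordComp_support_length c (x :: v') u s hs
        have hnil : s ≠ [] := by intro h; rw [h] at hlen; simp at hlen
        simp only []
        rw [wordComp_nil, if_neg hnil, Finsupp.coe_zero, Pi.zero_apply, mul_zero]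
      rw [hL, wordComp_nil c (x :: v'), if_neg (by simp), Finsupp.sum_zero_index]
  | cons x w' ih =>
    obtain ⟨n, b⟩ := x
    rcases t with _ | ⟨a, t'⟩
    · -- t = []
      have hL : (wordComp c u v).sum
          (fun s cs => cs * (wordComp c s (⟨n, b⟩ :: w')) []) = 0 := by
        refine Finset.sum_eq_zero fun s hs => ?_
        simp only []
        rw [wordComp_cons_apply_nil, mul_zero]
      have hR : (wordComp c v (⟨n, b⟩ :: w')).sum
          (fun s cs => cs * (wordComp c u s) []) = 0 := by
        refine Finset.sum_eq_zero fun s hs => ?_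
        have hlen := wordComp_support_length c (⟨n, b⟩ :: w') v s hs
        rcases s with _ | ⟨a₀, r⟩
        · simp at hlen
        · obtain ⟨m, b'⟩ := a₀
          simp only []
          rw [wordComp_cons_apply_nil, mul_zero]
      rw [hL, hR]
    · -- t = a :: t'
      by_cases hn : n ≤ v.length
      · -- main case
        have hvn : (v.take n).length = n := by rw [List.length_take]; omega
        have hsplit := wordComp_split c u (v.take n) (v.drop n)
        rw [List.take_append_drop] at hsplit
        have hLHS : (wordComp c u v).sum
            (fun s cs => cs * wordComp c s (⟨n, b⟩ :: w') (a :: t'))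
            = ((wordComp c (v.take n) [⟨n, b⟩]).sum
                (fun s cs => cs * wordComp c (u.take (aritySum (v.take n))) s [a]))
              * ((wordComp c (v.drop n) w').sum
                (fun r cr => cr * wordComp c (u.drop (aritySum (v.take n))) r t')) := by
          calc ((wordComp c u v).sum
                (fun s cs => cs * wordComp c s (⟨n, b⟩ :: w') (a :: t')))
              = ((wordComp c (u.take (aritySum (v.take n))) (v.take n)).sum fun s₁ c₁ =>
                  (wordComp c (u.drop (aritySum (v.take n))) (v.drop n)).sum fun s₂ c₂ =>
                    Finsupp.single (s₁ ++ s₂) (c₁ * c₂)).sum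
                  (fun s cs => cs * wordComp c s (⟨n, b⟩ :: w') (a :: t')) := by
                rw [hsplit]
            _ = (wordComp c (u.take (aritySum (v.take n))) (v.take n)).sum fun s₁ c₁ =>
                  (wordComp c (u.drop (aritySum (v.take n))) (v.drop n)).sum fun s₂ c₂ =>
                    (c₁ * c₂) * wordComp c (s₁ ++ s₂) (⟨n, b⟩ :: w') (a :: t') :=
                pair_sum_general _ _ (fun s₁ s₂ => s₁ ++ s₂)
                  (fun s cs => cs * wordComp c s (⟨n, b⟩ :: w') (a :: t'))
                  (fun x => zero_mul _) (fun x y z => add_mul y z _)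
            _ = (wordComp c (u.take (aritySum (v.take n))) (v.take n)).sum fun s₁ c₁ =>
                  (c₁ * wordComp c s₁ [⟨n, b⟩] [a])
                    * ((wordComp c (u.drop (aritySum (v.take n))) (v.drop n)).sum fun s₂ c₂ =>
                        c₂ * wordComp c s₂ w' t') := by
                refine Finsupp.sum_congr fun s₁ hs₁ => ?_
                have hlen : s₁.length = n :=
                  (wordComp_support_length c _ _ _ hs₁).trans hvn
                rw [Finsupp.mul_sum]
                refine Finsupp.sum_congr fun s₂ _ => ?_
                rw [wordComp_singleton_factor, List.take_left' hlen, List.drop_left' hlen]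
                ring
            _ = ((wordComp c (u.take (aritySum (v.take n))) (v.take n)).sum fun s₁ c₁ =>
                  c₁ * wordComp c s₁ [⟨n, b⟩] [a])
                    * ((wordComp c (u.drop (aritySum (v.take n))) (v.drop n)).sum fun s₂ c₂ =>
                        c₂ * wordComp c s₂ w' t') := by
                rw [Finsupp.sum_mul]
            _ = ((wordComp c (v.take n) [⟨n, b⟩]).sum
                  (fun s cs => cs * wordComp c (u.take (aritySum (v.take n))) s [a]))
                * ((wordComp c (v.drop n) w').sum
                  (fun r cr => cr * wordComp c (u.drop (aritySum (v.take n))) r t')) := by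
                rw [hassoc (u.take (aritySum (v.take n))) (v.take n) n b [a],
                  ih (u.drop (aritySum (v.take n))) (v.drop n) t']
        have hRHS : (wordComp c v (⟨n, b⟩ :: w')).sum
            (fun s cs => cs * wordComp c u s (a :: t'))
            = ((wordComp c (v.take n) [⟨n, b⟩]).sum
                (fun s cs => cs * wordComp c (u.take (aritySum (v.take n))) s [a]))
              * ((wordComp c (v.drop n) w').sum
                (fun r cr => cr * wordComp c (u.drop (aritySum (v.take n))) r t')) := by
          calc ((wordComp c v (⟨n, b⟩ :: w')).sum
                (fun s cs => cs * wordComp c u s (a :: t')))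
              = ((letterComp c (v.take n) b).sum fun a₀ c₀ =>
                  (wordComp c (v.drop n) w').sum fun r cr =>
                    Finsupp.single (a₀ :: r) (c₀ * cr)).sum
                  (fun s cs => cs * wordComp c u s (a :: t')) := by
                rw [wordComp_cons]
            _ = (letterComp c (v.take n) b).sum fun a₀ c₀ =>
                  (wordComp c (v.drop n) w').sum fun r cr =>
                    (c₀ * cr) * wordComp c u (a₀ :: r) (a :: t') :=
                pair_sum_general _ _ (fun a₀ r => a₀ :: r)
                  (fun s cs => cs * wordComp c u s (a :: t'))
                  (fun x => zero_mul _) (fun x y z => add_mul y z _)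
            _ = (letterComp c (v.take n) b).sum fun a₀ c₀ =>
                  (c₀ * wordComp c (u.take (aritySum (v.take n))) [a₀] [a])
                    * ((wordComp c (v.drop n) w').sum fun r cr =>
                        cr * wordComp c (u.drop (aritySum (v.take n))) r t') := by
                refine Finsupp.sum_congr fun a₀ ha₀ => ?_
                have hk : a₀.1 = aritySum (v.take n) := letterComp_fst c ha₀
                obtain ⟨k0, b0⟩ := a₀
                have hk' : k0 = aritySum (v.take n) := hk
                subst hk'
                rw [Finsupp.mul_sum]
                refine Finsupp.sum_congr fun r _ => ?_
                rw [wordComp_singleton_factor]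
                ring
            _ = ((letterComp c (v.take n) b).sum fun a₀ c₀ =>
                  c₀ * wordComp c (u.take (aritySum (v.take n))) [a₀] [a])
                    * ((wordComp c (v.drop n) w').sum fun r cr =>
                        cr * wordComp c (u.drop (aritySum (v.take n))) r t') := by
                rw [Finsupp.sum_mul]
            _ = ((wordComp c (v.take n) [⟨n, b⟩]).sum
                  (fun s cs => cs * wordComp c (u.take (aritySum (v.take n))) s [a]))
                * ((wordComp c (v.drop n) w').sum
                  (fun r cr => cr * wordComp c (u.drop (aritySum (v.take n))) r t')) := by
                rw [wordComp_singleton_eq c b hvn,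
                  single_sum_general _ (fun a₀ => [a₀])
                    (fun s cs => cs * wordComp c (u.take (aritySum (v.take n))) s [a])
                    (fun x => zero_mul _) (fun x y z => add_mul y z _)]
        rw [hLHS, hRHS]
      · -- v too short: both sides vanish
        have hL : (wordComp c u v).sum
            (fun s cs => cs * wordComp c s (⟨n, b⟩ :: w') (a :: t')) = 0 := by
          refine Finset.sum_eq_zero fun s hs => ?_
          have hlen := wordComp_support_length c v u s hs
          simp only []
          rw [wordComp_singleton_factor,
            wordComp_singleton_zero c b (by rw [List.length_take]; omega),
            Finsupp.coe_zero, Pi.zero_apply, zero_mul, mul_zero]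
        have hR : (wordComp c v (⟨n, b⟩ :: w')).sum
            (fun s cs => cs * wordComp c u s (a :: t')) = 0 := by
          rw [wordComp_cons, letterComp_eq_zero c (by rw [List.length_take]; omega),
            Finsupp.sum_zero_index, Finsupp.sum_zero_index]
        rw [hL, hR]
end

section
/- If two graded bialgebras (A, Δ_A) and (B, Δ_B) are in cointeraction via a coaction ρ: A → B ⊗ A, and α is a character of B while a, b are linear functionals on A, then defining α ⋆ a = (α ⊗ a) ∘ ρ and the convolution a ⋆_A b = (a ⊗ b) ∘ Δ_A, one has α ⋆ (a ⋆_A b) = (α ⋆ a) ⋆_A (α ⋆ b). -/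
open scoped TensorProduct

/-- The map `m_B^{1,3} : (B ⊗ A) ⊗ (B ⊗ A) → B ⊗ (A ⊗ A)`,
`a ⊗ b ⊗ c ⊗ d ↦ a·_B c ⊗ b ⊗ d`. -/
noncomputable def m13 (K A B : Type*) [CommRing K] [Ring A] [Algebra K A]
    [Ring B] [Algebra K B] :
    (B ⊗[K] A) ⊗[K] (B ⊗[K] A) →ₗ[K] B ⊗[K] (A ⊗[K] A) :=
  (TensorProduct.assoc K B A A).toLinearMap ∘ₗ
  (LinearMap.rTensor A (LinearMap.rTensor A (LinearMap.mul' K B))) ∘ₗ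
  (LinearMap.rTensor A (TensorProduct.assoc K B B A).symm.toLinearMap) ∘ₗ
  (LinearMap.rTensor A (LinearMap.lTensor B (TensorProduct.comm K A B).toLinearMap)) ∘ₗ
  (LinearMap.rTensor A (TensorProduct.assoc K B A B).toLinearMap) ∘ₗ
  (TensorProduct.assoc K (B ⊗[K] A) B A).symm.toLinearMap

/-- The convolution product `a ⋆_A b = (a ⊗ b) ∘ Δ_A` of linear functionals on a
bialgebra `A`. -/
noncomputable def convA {K A : Type*} [Field K] [Ring A] [Bialgebra K A]
    (a b : A →ₗ[K] K) : A →ₗ[K] K :=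
  (TensorProduct.lid K K).toLinearMap ∘ₗ TensorProduct.map a b ∘ₗ Coalgebra.comul

/-- The action `α ⋆ a = (α ⊗ a) ∘ ρ` of a functional on `B` on functionals on `A`,
through a coaction `ρ : A → B ⊗ A`. -/
noncomputable def coactStar {K A B : Type*} [Field K] [Ring A] [Bialgebra K A]
    [Ring B] [Bialgebra K B] (ρ : A →ₗ[K] B ⊗[K] A)
    (α : B →ₗ[K] K) (a : A →ₗ[K] K) : A →ₗ[K] K :=
  (TensorProduct.lid K K).toLinearMap ∘ₗ TensorProduct.map α a ∘ₗ ρ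

lemma m13_tmul {K A B : Type*} [CommRing K] [Ring A] [Algebra K A]
    [Ring B] [Algebra K B] (b1 b2 : B) (a1 a2 : A) :
    m13 K A B ((b1 ⊗ₜ[K] a1) ⊗ₜ[K] (b2 ⊗ₜ[K] a2)) = (b1 * b2) ⊗ₜ[K] (a1 ⊗ₜ[K] a2) := by
  simp [m13, TensorProduct.assoc_tmul, TensorProduct.assoc_symm_tmul,
    LinearMap.mul'_apply]

/-- If two bialgebras `A` and `B` are in cointeraction via a coaction `ρ : A → B ⊗ A`,
`α` is a character of `B`, and `a`, `b` are linear functionals on `A`, then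
`α ⋆ (a ⋆_A b) = (α ⋆ a) ⋆_A (α ⋆ b)`. -/
theorem cointeraction_star_compat {K A B : Type*} [Field K] [CharZero K]
    [Ring A] [Bialgebra K A] [Ring B] [Bialgebra K B]
    (ρ : A →ₗ[K] B ⊗[K] A)
    (hρ1 : ρ 1 = 1 ⊗ₜ[K] 1)
    (hρm : ∀ x y : A, ρ (x * y) = ρ x * ρ y)
    (hcounit : ∀ x : A,
      (LinearMap.lTensor B (Coalgebra.counit (R := K) (A := A))) (ρ x)
        = Coalgebra.counit (R := K) x • ((1 : B) ⊗ₜ[K] (1 : K)))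
    (hcoact : ∀ x : A,
      (LinearMap.lTensor B (Coalgebra.comul (R := K) (A := A))) (ρ x)
        = m13 K A B ((TensorProduct.map ρ ρ) (Coalgebra.comul x)))
    (α : B →ₗ[K] K) (hα1 : α 1 = 1) (hαm : ∀ x y : B, α (x * y) = α x * α y)
    (a b : A →ₗ[K] K) :
    coactStar ρ α (convA a b) = convA (coactStar ρ α a) (coactStar ρ α b) := by
  set φ : B ⊗[K] A →ₗ[K] K := (TensorProduct.lid K K).toLinearMap ∘ₗ TensorProduct.map α a
  set ψ : B ⊗[K] A →ₗ[K] K := (TensorProduct.lid K K).toLinearMap ∘ₗ TensorProduct.map α b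
  have key : ∀ t : (B ⊗[K] A) ⊗[K] (B ⊗[K] A),
      (TensorProduct.lid K K)
        ((TensorProduct.map α
          ((TensorProduct.lid K K).toLinearMap ∘ₗ TensorProduct.map a b)) (m13 K A B t))
      = (TensorProduct.lid K K) ((TensorProduct.map φ ψ) t) := by
    intro t
    induction t using TensorProduct.induction_on with
    | zero => simp
    | add u v hu hv => simp [map_add, hu, hv]
    | tmul u v =>
      induction u using TensorProduct.induction_on with
      | zero => simp
      | add u1 u2 h1 h2 =>
        simp only [TensorProduct.add_tmul, map_add, h1, h2]
      | tmul b1 a1 =>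
        induction v using TensorProduct.induction_on with
        | zero => simp
        | add v1 v2 h1 h2 =>
          simp only [TensorProduct.tmul_add, map_add, h1, h2]
        | tmul b2 a2 =>
          simp [m13_tmul, φ, ψ, hαm, TensorProduct.smul_tmul', smul_eq_mul]
          ring
  ext x
  have h1 : coactStar ρ α (convA a b) x
      = (TensorProduct.lid K K)
        ((TensorProduct.map α
          ((TensorProduct.lid K K).toLinearMap ∘ₗ TensorProduct.map a b))
          ((LinearMap.lTensor B (Coalgebra.comul (R := K) (A := A))) (ρ x))) := by
    have : TensorProduct.map α
        ((TensorProduct.lid K K).toLinearMap ∘ₗ TensorProduct.map a b ∘ₗ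
          Coalgebra.comul (R := K) (A := A))
        = (TensorProduct.map α
            ((TensorProduct.lid K K).toLinearMap ∘ₗ TensorProduct.map a b)) ∘ₗ
          LinearMap.lTensor B (Coalgebra.comul (R := K) (A := A)) := by
      rw [LinearMap.lTensor, ← TensorProduct.map_comp]
      simp [LinearMap.comp_assoc]
    simp only [coactStar, LinearMap.comp_apply]
    rw [show (convA a b : A →ₗ[K] K) = (TensorProduct.lid K K).toLinearMap ∘ₗ
      TensorProduct.map a b ∘ₗ Coalgebra.comul from rfl, this, LinearMap.comp_apply]
    rfl
  rw [h1, hcoact, key]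
  have h2 : TensorProduct.map φ ψ ∘ₗ TensorProduct.map ρ ρ
      = TensorProduct.map (φ ∘ₗ ρ) (ψ ∘ₗ ρ) := by
    rw [← TensorProduct.map_comp]
  have h3 : TensorProduct.map φ ψ ((TensorProduct.map ρ ρ) (Coalgebra.comul x))
      = TensorProduct.map (φ ∘ₗ ρ) (ψ ∘ₗ ρ) (Coalgebra.comul x) := by
    rw [← h2]; rfl
  rw [h3]
  simp only [convA, coactStar, φ, ψ, LinearMap.comp_apply, LinearMap.comp_assoc]
  rfl
end
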